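/- Let ζ be a unit vector in ℂ², k ∈ ℕ with k ≥ 1, r = 1/√k, and let ω₁,…,ω_K be unit vectors such that for each m ∈ ℕ, the number of j with m·r ≤ √(1-|⟨ζ,ω_j⟩|²) < (m+1)·r is at most (m+2)². Then ∑_{j=1}^K |⟨ζ,ω_j⟩|^k ≤ ∑_{m=0}^∞ (m+2)²·e^{-m²/2} =: Σ < ∞. -/

import Mathlib

lemma aux_summable : Summable (fun m : ℕ => ((m : ℝ) + 2) ^ 2 * Real.exp (-(m : ℝ) ^ 2 / 2)) := by
  have h0 : Summable (fun n : ℕ => (n : ℝ) ^ 2 * Real.exp (-(1/2) * n)) :=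
    Real.summable_pow_mul_exp_neg_nat_mul 2 (by norm_num)
  have h1 : Summable (fun n : ℕ => ((n + 2 : ℕ) : ℝ) ^ 2 * Real.exp (-(1/2) * (n + 2 : ℕ))) :=
    (summable_nat_add_iff 2).mpr h0
  have h2 : Summable (fun n : ℕ => Real.exp 1 * (((n + 2 : ℕ) : ℝ) ^ 2 * Real.exp (-(1/2) * (n + 2 : ℕ)))) :=
    h1.mul_left _
  apply Summable.of_nonneg_of_le (fun m => by positivity) _ h2
  intro m
  push_cast
  have he : Real.exp 1 * (((m:ℝ) + 2) ^ 2 * Real.exp (-(1/2) * ((m:ℝ) + 2)))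
      = ((m:ℝ) + 2) ^ 2 * Real.exp (-(m:ℝ)/2) := by
    rw [mul_comm (Real.exp 1), mul_assoc, ← Real.exp_add]
    congr 2
    ring
  rw [he]
  gcongr
  exact_mod_cast Nat.le_self_pow two_ne_zero m

/-- Upper bound for `∑ⱼ |⟨ζ,ωⱼ⟩|ᵏ` given the annulus counting estimate. -/
theorem stmt_12 (ζ : EuclideanSpace ℂ (Fin 2)) (hζ : ‖ζ‖ = 1)
    (k : ℕ) (hk : 1 ≤ k) (r : ℝ) (hr : r = 1 / Real.sqrt k)
    (K : ℕ) (ω : Fin K → EuclideanSpace ℂ (Fin 2)) (hω : ∀ j, ‖ω j‖ = 1)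
    (hcount : ∀ m : ℕ,
      ({j : Fin K | m * r ≤ Real.sqrt (1 - ‖(inner ℂ ζ (ω j) : ℂ)‖ ^ 2) ∧
        Real.sqrt (1 - ‖(inner ℂ ζ (ω j) : ℂ)‖ ^ 2) < (m + 1) * r}.ncard : ℝ) ≤
        ((m : ℝ) + 2) ^ 2) :
    ∑ j, ‖(inner ℂ ζ (ω j) : ℂ)‖ ^ k ≤
      ∑' m : ℕ, ((m : ℝ) + 2) ^ 2 * Real.exp (-(m : ℝ) ^ 2 / 2) := by
  classical
  have hk0 : (0:ℝ) < k := by exact_mod_cast hk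
  have hsk : 0 < Real.sqrt k := Real.sqrt_pos.mpr hk0
  have hr0 : 0 < r := by rw [hr]; positivity
  have hrk : r ^ 2 * k = 1 := by
    rw [hr, div_pow, one_pow, Real.sq_sqrt hk0.le]
    field_simp
  set c : Fin K → ℝ := fun j => ‖(inner ℂ ζ (ω j) : ℂ)‖ with hc
  have hc0 : ∀ j, 0 ≤ c j := fun j => norm_nonneg _
  have hc1 : ∀ j, c j ≤ 1 := fun j => by
    calc c j ≤ ‖ζ‖ * ‖ω j‖ := norm_inner_le_norm _ _
    _ = 1 := by rw [hζ, hω j]; ring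
  set x : Fin K → ℝ := fun j => Real.sqrt (1 - c j ^ 2) with hx
  have hx0 : ∀ j, 0 ≤ x j := fun j => Real.sqrt_nonneg _
  set φ : Fin K → ℕ := fun j => ⌊x j / r⌋₊ with hφ
  -- key pointwise bound
  have key : ∀ j, c j ^ k ≤ Real.exp (-((φ j : ℝ)) ^ 2 / 2) := by
    intro j
    have h1 : (φ j : ℝ) * r ≤ x j := by
      rw [← le_div_iff₀ hr0]
      exact Nat.floor_le (by positivity)
    have h2 : ((φ j : ℝ) * r) ^ 2 ≤ 1 - c j ^ 2 := by
      have := pow_le_pow_left₀ (by positivity) h1 2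
      rwa [Real.sq_sqrt (by nlinarith [hc1 j, hc0 j])] at this
    have h3 : c j ^ 2 ≤ Real.exp (-(((φ j : ℝ)) ^ 2 * r ^ 2)) := by
      calc c j ^ 2 ≤ 1 - ((φ j : ℝ)) ^ 2 * r ^ 2 := by nlinarith
      _ ≤ Real.exp (-(((φ j : ℝ)) ^ 2 * r ^ 2)) := by
          linarith [Real.add_one_le_exp (-(((φ j : ℝ)) ^ 2 * r ^ 2))]
    have h4 : (c j ^ k) ^ 2 ≤ Real.exp (-((φ j : ℝ)) ^ 2) := by
      calc (c j ^ k) ^ 2 = (c j ^ 2) ^ k := by ring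
      _ ≤ (Real.exp (-(((φ j : ℝ)) ^ 2 * r ^ 2))) ^ k :=
          pow_le_pow_left₀ (by positivity) h3 k
      _ = Real.exp (-(((φ j : ℝ)) ^ 2 * (r ^ 2 * k))) := by
          rw [← Real.exp_nat_mul]; ring_nf
      _ = Real.exp (-((φ j : ℝ)) ^ 2) := by rw [hrk, mul_one]
    have h5 := Real.sqrt_le_sqrt h4
    rwa [Real.sqrt_sq (by positivity),
      show Real.exp (-((φ j : ℝ)) ^ 2) = Real.exp (-((φ j : ℝ)) ^ 2 / 2) ^ 2 by
        rw [← Real.exp_nat_mul]; congr 1; push_cast; ring,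
      Real.sqrt_sq (Real.exp_nonneg _)] at h5
  -- every fiber index is below k+1
  have hφlt : ∀ j, φ j ∈ Finset.range (k + 1) := by
    intro j
    rw [Finset.mem_range, Nat.lt_succ_iff]
    have h1 : x j ≤ 1 := Real.sqrt_le_one.mpr (by nlinarith [hc0 j])
    have h2 : (1:ℝ) ≤ Real.sqrt k := by
      rw [show (1:ℝ) = Real.sqrt 1 from Real.sqrt_one.symm]
      exact Real.sqrt_le_sqrt (by exact_mod_cast hk)
    have h4 : (k:ℝ) * (1 / Real.sqrt k) = Real.sqrt k := by
      rw [← Real.sq_sqrt hk0.le, sq]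
      field_simp
      rw [Real.sqrt_sq hsk.le]
    have hle : x j / r ≤ (k:ℝ) := by
      rw [div_le_iff₀ hr0, hr, h4]
      linarith
    calc φ j ≤ ⌊(k:ℝ)⌋₊ := Nat.floor_le_floor hle
    _ = k := Nat.floor_natCast k
  -- fiberwise decomposition
  have hsum_eq : ∑ j, c j ^ k
      = ∑ m ∈ Finset.range (k+1), ∑ j ∈ Finset.univ.filter (fun j => φ j = m), c j ^ k :=
    (Finset.sum_fiberwise_of_maps_to (fun j _ => hφlt j) _).symm
  have hstep : ∀ m ∈ Finset.range (k+1),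
      ∑ j ∈ Finset.univ.filter (fun j => φ j = m), c j ^ k
      ≤ ((m:ℝ) + 2) ^ 2 * Real.exp (-(m:ℝ) ^ 2 / 2) := by
    intro m _
    have hsetcard :
        ({j : Fin K | (m:ℝ) * r ≤ x j ∧ x j < ((m:ℝ) + 1) * r}.ncard : ℝ)
        = ((Finset.univ.filter (fun j => φ j = m)).card : ℝ) := by
      congr 1
      rw [← Set.ncard_coe_finset]
      congr 1
      ext j
      simp only [Finset.coe_filter, Set.mem_setOf_eq, Finset.mem_univ, true_and]
      rw [hφ]
      simp only []
      rw [Nat.floor_eq_iff (by positivity), le_div_iff₀ hr0, div_lt_iff₀ hr0]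
    have hcard := hcount m
    rw [show ({j : Fin K | (m:ℝ) * r ≤ Real.sqrt (1 - ‖(inner ℂ ζ (ω j) : ℂ)‖ ^ 2) ∧
        Real.sqrt (1 - ‖(inner ℂ ζ (ω j) : ℂ)‖ ^ 2) < ((m:ℝ) + 1) * r})
        = {j : Fin K | (m:ℝ) * r ≤ x j ∧ x j < ((m:ℝ) + 1) * r} from rfl, hsetcard] at hcard
    calc ∑ j ∈ Finset.univ.filter (fun j => φ j = m), c j ^ k
        ≤ ∑ j ∈ Finset.univ.filter (fun j => φ j = m), Real.exp (-(m:ℝ) ^ 2 / 2) := by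
          apply Finset.sum_le_sum
          intro j hj
          have hjm : φ j = m := (Finset.mem_filter.mp hj).2
          have := key j
          rwa [hjm] at this
    _ = ((Finset.univ.filter (fun j => φ j = m)).card : ℝ) * Real.exp (-(m:ℝ) ^ 2 / 2) := by
          rw [Finset.sum_const, nsmul_eq_mul]
    _ ≤ ((m:ℝ) + 2) ^ 2 * Real.exp (-(m:ℝ) ^ 2 / 2) := by
          gcongr
  calc ∑ j, c j ^ k ≤ ∑ m ∈ Finset.range (k+1), ((m:ℝ) + 2) ^ 2 * Real.exp (-(m:ℝ) ^ 2 / 2) := by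
        rw [hsum_eq]; exact Finset.sum_le_sum hstep
  _ ≤ ∑' m : ℕ, ((m:ℝ) + 2) ^ 2 * Real.exp (-(m:ℝ) ^ 2 / 2) :=
      Summable.sum_le_tsum _ (fun m _ => by positivity) aux_summable
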